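/- For d ≥ 0, a scaling 𝔰 ∈ ℕ^{d+1}, α, β ∈ ℝ₊, a point x ∈ ℝ^{d+1} and smooth functions f, g : ℝ^{d+1} → ℝ, the Taylor jet operators T_{α,x,y} f := ∑_{ℓ ∈ ℕ^{d+1}, |ℓ|_𝔰 < α} (y−x)^ℓ/ℓ! · (D^ℓ f)(x) satisfy the Rota–Baxter family identity: (T_{α,x,·} f)(T_{β,x,·} g) = T_{α+β,x,·}[ (T_{α,x,·} f)·g + f·(T_{β,x,·} g) − f·g ]. -/

import Mathlib

open scoped BigOperators

/-- Partial derivative of `f : ℝ^{d+1} → ℝ` in the `i`-th coordinate direction. -/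
noncomputable def pderiv' {n : ℕ} (i : Fin n) (f : (Fin n → ℝ) → ℝ) :
    (Fin n → ℝ) → ℝ :=
  fun x => fderiv ℝ f x (Pi.single i 1)

/-- Mixed partial derivative `D^ℓ` of multi-order `ℓ`. -/
noncomputable def mderiv {n : ℕ} (ℓ : Fin n → ℕ) (f : (Fin n → ℝ) → ℝ) :
    (Fin n → ℝ) → ℝ :=
  (((List.finRange n).map fun i => (pderiv' i)^[ℓ i]).foldr (· ∘ ·) id) f

/-- The `𝔰`-scaled Taylor jet operator
`T_{α,x,y} f = ∑_{|ℓ|_𝔰 < α} (y−x)^ℓ/ℓ! (D^ℓ f)(x)`. -/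
noncomputable def tjet {n : ℕ} (s : Fin n → ℕ) (α : ℝ) (x : Fin n → ℝ)
    (f : (Fin n → ℝ) → ℝ) : (Fin n → ℝ) → ℝ :=
  fun y => ∑ᶠ ℓ : Fin n → ℕ,
    if (∑ i, (s i * ℓ i : ℝ)) < α then
      (∏ i, (y i - x i) ^ ℓ i) / (∏ i, ((ℓ i).factorial : ℝ)) * mderiv ℓ f x
    else 0

section basics
variable {n : ℕ}

lemma pderiv'_contDiff (i : Fin n) {f : (Fin n → ℝ) → ℝ} (hf : ContDiff ℝ (⊤ : ℕ∞) f) :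
    ContDiff ℝ (⊤ : ℕ∞) (pderiv' i f) := by
  have h1 : ContDiff ℝ (⊤ : ℕ∞) (fderiv ℝ f) := hf.fderiv_right le_rfl
  exact h1.clm_apply contDiff_const

lemma pderiv'_iterate_contDiff (i : Fin n) (k : ℕ) {f : (Fin n → ℝ) → ℝ}
    (hf : ContDiff ℝ (⊤ : ℕ∞) f) : ContDiff ℝ (⊤ : ℕ∞) ((pderiv' i)^[k] f) := by
  induction k generalizing f with
  | zero => simpa using hf
  | succ k ih =>
    rw [Function.iterate_succ_apply]
    exact ih (pderiv'_contDiff i hf)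

lemma pderiv'_add (i : Fin n) {f g : (Fin n → ℝ) → ℝ}
    (hf : Differentiable ℝ f) (hg : Differentiable ℝ g) :
    pderiv' i (fun y => f y + g y) = fun y => pderiv' i f y + pderiv' i g y := by
  funext y
  simp only [pderiv']
  rw [fderiv_fun_add (hf y) (hg y)]
  simp

lemma pderiv'_const_mul (i : Fin n) (c : ℝ) {f : (Fin n → ℝ) → ℝ}
    (hf : Differentiable ℝ f) :
    pderiv' i (fun y => c * f y) = fun y => c * pderiv' i f y := by
  funext y
  simp only [pderiv']
  rw [fderiv_const_mul (hf y)]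
  simp

lemma pderiv'_mul (i : Fin n) {f g : (Fin n → ℝ) → ℝ}
    (hf : Differentiable ℝ f) (hg : Differentiable ℝ g) :
    pderiv' i (fun y => f y * g y)
      = fun y => pderiv' i f y * g y + f y * pderiv' i g y := by
  funext y
  simp only [pderiv']
  rw [fderiv_fun_mul (hf y) (hg y)]
  simp only [ContinuousLinearMap.add_apply, ContinuousLinearMap.smul_apply, smul_eq_mul]; ring

end basics

section iter
variable {n : ℕ}

lemma cd_diff {f : (Fin n → ℝ) → ℝ} (hf : ContDiff ℝ (⊤ : ℕ∞) f) : Differentiable ℝ f :=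
  hf.differentiable (by simp)

lemma pderiv'_iterate_add (i : Fin n) (k : ℕ) {f g : (Fin n → ℝ) → ℝ}
    (hf : ContDiff ℝ (⊤ : ℕ∞) f) (hg : ContDiff ℝ (⊤ : ℕ∞) g) :
    (pderiv' i)^[k] (fun y => f y + g y)
      = fun y => (pderiv' i)^[k] f y + (pderiv' i)^[k] g y := by
  induction k generalizing f g with
  | zero => simp
  | succ k ih =>
    rw [Function.iterate_succ_apply, Function.iterate_succ_apply,
      Function.iterate_succ_apply,
      pderiv'_add i (cd_diff hf) (cd_diff hg)]
    exact ih (pderiv'_contDiff i hf) (pderiv'_contDiff i hg)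

lemma pderiv'_iterate_const_mul (i : Fin n) (k : ℕ) (c : ℝ) {f : (Fin n → ℝ) → ℝ}
    (hf : ContDiff ℝ (⊤ : ℕ∞) f) :
    (pderiv' i)^[k] (fun y => c * f y) = fun y => c * (pderiv' i)^[k] f y := by
  induction k generalizing f with
  | zero => simp
  | succ k ih =>
    rw [Function.iterate_succ_apply, Function.iterate_succ_apply,
      pderiv'_const_mul i c (cd_diff hf)]
    exact ih (pderiv'_contDiff i hf)

lemma pascal_sum (k : ℕ) (A : ℕ → ℝ) :
    ∑ j ∈ Finset.range (k+1), (k.choose j : ℝ) * A (j+1)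
      + ∑ j ∈ Finset.range (k+1), (k.choose j : ℝ) * A j
    = ∑ j ∈ Finset.range (k+2), ((k+1).choose j : ℝ) * A j := by
  rw [Finset.sum_range_succ' (fun j => ((k+1).choose j : ℝ) * A j) (k+1)]
  simp only [Nat.choose_succ_succ', Nat.cast_add, add_mul]
  rw [Finset.sum_add_distrib]
  have h1 : ∑ j ∈ Finset.range (k+1), (k.choose (j+1) : ℝ) * A (j+1)
      + ((k+1).choose 0 : ℝ) * A 0
      = ∑ j ∈ Finset.range (k+1), (k.choose j : ℝ) * A j := by
    have := Finset.sum_range_succ' (fun j => (k.choose j : ℝ) * A j) (k+1)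
    rw [Finset.sum_range_succ (fun j => (k.choose j : ℝ) * A j) (k+1)] at this
    simp only [Nat.choose_succ_self, Nat.cast_zero, zero_mul, add_zero] at this
    rw [this]; norm_num
  linarith [h1]

lemma pderiv'_iterate_mul (i : Fin n) (k : ℕ) {f g : (Fin n → ℝ) → ℝ}
    (hf : ContDiff ℝ (⊤ : ℕ∞) f) (hg : ContDiff ℝ (⊤ : ℕ∞) g) :
    (pderiv' i)^[k] (fun y => f y * g y)
      = fun y => ∑ j ∈ Finset.range (k+1),
          (k.choose j : ℝ) * ((pderiv' i)^[j] f y * (pderiv' i)^[k-j] g y) := by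
  induction k generalizing f g with
  | zero => simp
  | succ k ih =>
    rw [Function.iterate_succ_apply,
      pderiv'_mul i (cd_diff hf) (cd_diff hg),
      pderiv'_iterate_add i k ((pderiv'_contDiff i hf).mul hg)
        (hf.mul (pderiv'_contDiff i hg)),
      ih (pderiv'_contDiff i hf) hg, ih hf (pderiv'_contDiff i hg)]
    funext y
    have e1 : ∀ j, (pderiv' i)^[j] (pderiv' i f) y = (pderiv' i)^[j+1] f y := by
      intro j; rw [Function.iterate_succ_apply]
    have e2 : ∀ j, (pderiv' i)^[j] (pderiv' i g) y = (pderiv' i)^[j+1] g y := by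
      intro j; rw [Function.iterate_succ_apply]
    simp only [e1, e2]
    have := pascal_sum k (fun j => (pderiv' i)^[j] f y * (pderiv' i)^[k+1-j] g y)
    rw [← this]
    congr 1
    · apply Finset.sum_congr rfl
      intro j hj
      simp only [Finset.mem_range] at hj
      have h : k + 1 - (j + 1) = k - j := by omega
      rw [h]
    · apply Finset.sum_congr rfl
      intro j hj
      simp only [Finset.mem_range] at hj
      have : k + 1 - j = (k - j) + 1 := by omega
      rw [this, Function.iterate_succ_apply]

noncomputable def md {n : ℕ} (l : List (Fin n)) (ℓ : Fin n → ℕ) (f : (Fin n → ℝ) → ℝ) :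
    (Fin n → ℝ) → ℝ :=
  ((l.map fun i => (pderiv' i)^[ℓ i]).foldr (· ∘ ·) id) f

section md
variable {n : ℕ}

lemma md_nil (ℓ : Fin n → ℕ) (f : (Fin n → ℝ) → ℝ) : md [] ℓ f = f := rfl

lemma md_cons (i : Fin n) (l : List (Fin n)) (ℓ : Fin n → ℕ) (f : (Fin n → ℝ) → ℝ) :
    md (i :: l) ℓ f = (pderiv' i)^[ℓ i] (md l ℓ f) := rfl

lemma mderiv_eq_md (ℓ : Fin n → ℕ) (f : (Fin n → ℝ) → ℝ) :
    mderiv ℓ f = md (List.finRange n) ℓ f := rfl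

lemma md_contDiff (l : List (Fin n)) (ℓ : Fin n → ℕ) {f : (Fin n → ℝ) → ℝ}
    (hf : ContDiff ℝ (⊤ : ℕ∞) f) : ContDiff ℝ (⊤ : ℕ∞) (md l ℓ f) := by
  induction l with
  | nil => exact hf
  | cons i l ih => rw [md_cons]; exact pderiv'_iterate_contDiff i (ℓ i) ih

lemma md_congr (l : List (Fin n)) {ℓ₁ ℓ₂ : Fin n → ℕ} (f : (Fin n → ℝ) → ℝ)
    (h : ∀ i ∈ l, ℓ₁ i = ℓ₂ i) : md l ℓ₁ f = md l ℓ₂ f := by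
  induction l with
  | nil => rfl
  | cons i l ih =>
    rw [md_cons, md_cons, h i List.mem_cons_self,
      ih fun j hj => h j (List.mem_cons_of_mem i hj)]

lemma md_add (l : List (Fin n)) (ℓ : Fin n → ℕ) {f g : (Fin n → ℝ) → ℝ}
    (hf : ContDiff ℝ (⊤ : ℕ∞) f) (hg : ContDiff ℝ (⊤ : ℕ∞) g) :
    md l ℓ (fun y => f y + g y) = fun y => md l ℓ f y + md l ℓ g y := by
  induction l with
  | nil => rfl
  | cons i l ih =>
    rw [md_cons, ih, pderiv'_iterate_add i (ℓ i) (md_contDiff l ℓ hf) (md_contDiff l ℓ hg)]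
    rfl

lemma md_const_mul (l : List (Fin n)) (ℓ : Fin n → ℕ) (c : ℝ) {f : (Fin n → ℝ) → ℝ}
    (hf : ContDiff ℝ (⊤ : ℕ∞) f) :
    md l ℓ (fun y => c * f y) = fun y => c * md l ℓ f y := by
  induction l with
  | nil => rfl
  | cons i l ih =>
    rw [md_cons, ih, pderiv'_iterate_const_mul i (ℓ i) c (md_contDiff l ℓ hf)]
    rfl

lemma md_zero (l : List (Fin n)) (ℓ : Fin n → ℕ) :
    md l ℓ (fun _ => (0:ℝ)) = fun _ => 0 := by
  have h := md_const_mul l ℓ 0 (f := fun _ => (1:ℝ)) contDiff_const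
  simpa using h

lemma md_sum {ι : Type*} (l : List (Fin n)) (ℓ : Fin n → ℕ) (S : Finset ι)
    {F : ι → (Fin n → ℝ) → ℝ} (hF : ∀ p ∈ S, ContDiff ℝ (⊤ : ℕ∞) (F p)) :
    md l ℓ (fun y => ∑ p ∈ S, F p y) = fun y => ∑ p ∈ S, md l ℓ (F p) y := by
  classical
  induction S using Finset.induction with
  | empty => simpa using md_zero l ℓ
  | insert a S hnot ih =>
    have hFa := hF a (Finset.mem_insert_self a S)
    have hFS : ∀ p ∈ S, ContDiff ℝ (⊤ : ℕ∞) (F p) := fun p hp =>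
      hF p (Finset.mem_insert_of_mem hp)
    have : (fun y => ∑ p ∈ insert a S, F p y)
        = fun y => F a y + ∑ p ∈ S, F p y := by
      funext y; rw [Finset.sum_insert hnot]
    rw [this, md_add l ℓ hFa (ContDiff.sum hFS), ih hFS]
    funext y; rw [Finset.sum_insert hnot]
end md

section mono
variable {n : ℕ}

lemma mono_contDiff (x : Fin n → ℝ) (p : Fin n → ℕ) :
    ContDiff ℝ (⊤ : ℕ∞) (fun y : Fin n → ℝ => ∏ j, (y j - x j) ^ (p j)) := by
  apply contDiff_prod
  intro j _
  exact (((ContinuousLinearMap.proj j : (Fin n → ℝ) →L[ℝ] ℝ).contDiff).sub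
    contDiff_const).pow (p j)

lemma pderiv'_mono (i : Fin n) (x : Fin n → ℝ) (p : Fin n → ℕ) (c : ℝ) :
    pderiv' i (fun y => c * ∏ j, (y j - x j) ^ (p j))
      = fun y => (c * (p i : ℝ))
          * ∏ j, (y j - x j) ^ (Function.update p i (p i - 1) j) := by
  funext y
  have hder : ∀ j : Fin n, HasFDerivAt (fun y : Fin n → ℝ => (y j - x j) ^ (p j))
      (((p j : ℝ) * (y j - x j) ^ (p j - 1)) •
        (ContinuousLinearMap.proj j : (Fin n → ℝ) →L[ℝ] ℝ)) y := by
    intro j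
    have h1 : HasDerivAt (fun t : ℝ => (t - x j) ^ (p j))
        ((p j : ℝ) * (y j - x j) ^ (p j - 1)) (y j) := by
      simpa using (((hasDerivAt_id (y j)).sub_const (x j)).fun_pow (p j))
    exact h1.comp_hasFDerivAt (f := fun y : Fin n → ℝ => y j) y
      ((ContinuousLinearMap.proj j : (Fin n → ℝ) →L[ℝ] ℝ).hasFDerivAt)
  have hprod : HasFDerivAt (fun y : Fin n → ℝ => ∏ j, (y j - x j) ^ (p j))
      (∑ j, (∏ k ∈ Finset.univ.erase j, (y k - x k) ^ (p k)) •
        (((p j : ℝ) * (y j - x j) ^ (p j - 1)) •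
          (ContinuousLinearMap.proj j : (Fin n → ℝ) →L[ℝ] ℝ))) y :=
    HasFDerivAt.finset_prod fun j _ => hder j
  have hmul : HasFDerivAt (fun y : Fin n → ℝ => c * ∏ j, (y j - x j) ^ (p j))
      (c • (∑ j, (∏ k ∈ Finset.univ.erase j, (y k - x k) ^ (p k)) •
        (((p j : ℝ) * (y j - x j) ^ (p j - 1)) •
          (ContinuousLinearMap.proj j : (Fin n → ℝ) →L[ℝ] ℝ)))) y :=
    hprod.const_mul c
  rw [pderiv', hmul.fderiv]
  simp only [ContinuousLinearMap.smul_apply, ContinuousLinearMap.sum_apply,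
    ContinuousLinearMap.proj_apply, smul_eq_mul]
  have hsingle : ∀ j : Fin n, (Pi.single i (1:ℝ) : Fin n → ℝ) j = if j = i then 1 else 0 :=
    fun j => Pi.single_apply i (1:ℝ) j
  rw [Finset.sum_eq_single i]
  · rw [hsingle i]
    simp only [if_true, mul_one]
    by_cases hpi : p i = 0
    · simp [hpi]
    · have : ∏ j, (y j - x j) ^ (Function.update p i (p i - 1) j)
          = (y i - x i) ^ (p i - 1) * ∏ k ∈ Finset.univ.erase i, (y k - x k) ^ (p k) := by
        rw [← Finset.prod_erase_mul Finset.univ _ (Finset.mem_univ i)]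
        rw [Function.update_self, mul_comm]
        congr 1
        apply Finset.prod_congr rfl
        intro k hk
        rw [Function.update_of_ne (Finset.ne_of_mem_erase hk)]
      rw [this]; ring
  · intro j _ hj
    rw [hsingle j, if_neg hj]
    ring
  · intro h; exact absurd (Finset.mem_univ i) h

lemma pderiv'_iterate_mono (i : Fin n) (k : ℕ) (x : Fin n → ℝ) (p : Fin n → ℕ) (c : ℝ) :
    (pderiv' i)^[k] (fun y => c * ∏ j, (y j - x j) ^ (p j))
      = fun y => (c * ((p i).descFactorial k : ℝ))
          * ∏ j, (y j - x j) ^ (Function.update p i (p i - k) j) := by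
  induction k with
  | zero =>
    simp only [Function.iterate_zero, id_eq, Nat.descFactorial_zero, Nat.cast_one, mul_one,
      Nat.sub_zero, Function.update_eq_self]
  | succ k ih =>
    rw [Function.iterate_succ_apply', ih, pderiv'_mono i x _ _]
    funext y
    have hupd : Function.update (Function.update p i (p i - k)) i
        (Function.update p i (p i - k) i - 1) = Function.update p i (p i - (k+1)) := by
      rw [Function.update_self, Function.update_idem, Nat.sub_sub]
    rw [hupd, Function.update_self]
    have : (p i).descFactorial (k+1) = (p i - k) * (p i).descFactorial k :=
      Nat.descFactorial_succ (p i) k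
    rw [this]
    push_cast
    ring

lemma md_mono (l : List (Fin n)) (hl : l.Nodup) (m p : Fin n → ℕ) (x : Fin n → ℝ) (c : ℝ) :
    md l m (fun y => c * ∏ j, (y j - x j) ^ (p j))
      = fun y => (c * ∏ i ∈ l.toFinset, ((p i).descFactorial (m i) : ℝ))
          * ∏ j, (y j - x j) ^ (if j ∈ l then p j - m j else p j) := by
  classical
  induction l with
  | nil => simp [md_nil]
  | cons i l ih =>
    have hil : i ∉ l := (List.nodup_cons.mp hl).1
    have hln : l.Nodup := (List.nodup_cons.mp hl).2
    rw [md_cons, ih hln]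
    have hq : (fun j => if j ∈ l then p j - m j else p j) =
        fun j => (fun j => if j ∈ l then p j - m j else p j) j := rfl
    rw [pderiv'_iterate_mono i (m i) x _ _]
    funext y
    have hqi : (if i ∈ l then p i - m i else p i) = p i := by rw [if_neg hil]
    rw [hqi]
    have hupd : ∀ j, Function.update (fun j => if j ∈ l then p j - m j else p j) i
        (p i - m i) j = if j ∈ (i :: l) then p j - m j else p j := by
      intro j
      by_cases h : j = i
      · subst h
        rw [Function.update_self, if_pos List.mem_cons_self]
      · rw [Function.update_of_ne h]
        by_cases h2 : j ∈ l
        · rw [if_pos h2, if_pos (List.mem_cons_of_mem i h2)]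
        · rw [if_neg h2, if_neg (by simp [h, h2])]
    have hts : (i :: l).toFinset = insert i l.toFinset := by simp
    rw [hts, Finset.prod_insert (by simpa using hil)]
    have hprodeq : ∏ j, (y j - x j) ^ (Function.update
          (fun j => if j ∈ l then p j - m j else p j) i (p i - m i) j)
        = ∏ j, (y j - x j) ^ (if j ∈ (i :: l) then p j - m j else p j) := by
      apply Finset.prod_congr rfl
      intro j _
      rw [hupd j]
    rw [hprodeq]
    ring

lemma mderiv_mono (m p : Fin n → ℕ) (x : Fin n → ℝ) (c : ℝ) :
    mderiv m (fun y => c * ∏ j, (y j - x j) ^ (p j)) x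
      = if m = p then c * ∏ i, ((p i).factorial : ℝ) else 0 := by
  classical
  rw [mderiv_eq_md, md_mono (List.finRange n) (List.nodup_finRange n) m p x c]
  simp only [List.mem_finRange, if_true, List.toFinset_finRange, sub_self]
  by_cases h : m = p
  · subst h
    simp [Nat.descFactorial_self]
  · rw [if_neg h]
    obtain ⟨j, hj⟩ : ∃ j, m j ≠ p j := by
      by_contra hc
      push_neg at hc
      exact h (funext hc)
    rcases lt_or_gt_of_ne hj with hlt | hgt
    · have : (0:ℝ) ^ (p j - m j) = 0 := by
        apply zero_pow
        omega
      have h2 : (∏ j, (0:ℝ) ^ (p j - m j)) = 0 := Finset.prod_eq_zero (Finset.mem_univ j) this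
      rw [h2]; ring
    · have : ((p j).descFactorial (m j) : ℝ) = 0 := by
        norm_cast
        exact Nat.descFactorial_eq_zero_iff_lt.mpr hgt
      have h2 : (∏ i, ((p i).descFactorial (m i) : ℝ)) = 0 :=
        Finset.prod_eq_zero (Finset.mem_univ j) this
      rw [h2]; ring
end mono

section leibniz
variable {n : ℕ}

lemma pderiv'_iterate_sum (i : Fin n) (k : ℕ) {ι : Type} (S : Finset ι)
    {F : ι → (Fin n → ℝ) → ℝ} (hF : ∀ p ∈ S, ContDiff ℝ (⊤ : ℕ∞) (F p)) :
    (pderiv' i)^[k] (fun y => ∑ p ∈ S, F p y)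
      = fun y => ∑ p ∈ S, (pderiv' i)^[k] (F p) y := by
  classical
  induction S using Finset.induction with
  | empty =>
    simp only [Finset.sum_empty]
    have h0 : (fun _ : Fin n → ℝ => (0:ℝ)) = fun y => (0:ℝ) * (1:ℝ) := by funext; ring
    rw [h0, pderiv'_iterate_const_mul i k 0 contDiff_const]
    funext y; ring
  | insert a S hnot ih =>
    have hFa := hF a (Finset.mem_insert_self a S)
    have hFS : ∀ p ∈ S, ContDiff ℝ (⊤ : ℕ∞) (F p) := fun p hp =>
      hF p (Finset.mem_insert_of_mem hp)
    have h1 : (fun y => ∑ p ∈ insert a S, F p y)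
        = fun y => F a y + ∑ p ∈ S, F p y := by
      funext y; rw [Finset.sum_insert hnot]
    rw [h1, pderiv'_iterate_add i k hFa (ContDiff.sum hFS), ih hFS]
    funext y; rw [Finset.sum_insert hnot]

lemma md_leibniz (l : List (Fin n)) (hl : l.Nodup) (ℓ : Fin n → ℕ)
    (hsupp : ∀ j, j ∉ l → ℓ j = 0)
    {f g : (Fin n → ℝ) → ℝ} (hf : ContDiff ℝ (⊤ : ℕ∞) f) (hg : ContDiff ℝ (⊤ : ℕ∞) g) :
    md l ℓ (fun y => f y * g y)
      = fun y => ∑ m ∈ Finset.Iic ℓ,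
          (∏ j, ((ℓ j).choose (m j) : ℝ)) * (md l m f y * md l (ℓ - m) g y) := by
  classical
  induction l generalizing ℓ with
  | nil =>
    have hℓ : ℓ = 0 := funext fun j => hsupp j List.not_mem_nil
    subst hℓ
    have hIic : Finset.Iic (0 : Fin n → ℕ) = {0} := by
      ext m
      simp only [Finset.mem_Iic, Finset.mem_singleton]
      constructor
      · intro h; funext j; exact Nat.le_zero.mp (h j)
      · rintro rfl; exact le_rfl
    funext y
    rw [md_nil, hIic, Finset.sum_singleton]
    simp [md_nil]
  | cons i l ih =>
    have hil : i ∉ l := (List.nodup_cons.mp hl).1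
    have hln : l.Nodup := (List.nodup_cons.mp hl).2
    have hsupp' : ∀ j, j ∉ l → Function.update ℓ i 0 j = 0 := by
      intro j hj
      by_cases h : j = i
      · subst h; simp
      · rw [Function.update_of_ne h]
        exact hsupp j (by simp [List.mem_cons, h, hj])
    have h1 : md l ℓ (fun y => f y * g y)
        = md l (Function.update ℓ i 0) (fun y => f y * g y) :=
      md_congr l _ fun j hj => by
        have hji : j ≠ i := fun he => hil (he ▸ hj)
        rw [Function.update_of_ne hji]
    rw [md_cons, h1, ih hln (Function.update ℓ i 0) hsupp',
      pderiv'_iterate_sum i (ℓ i) _ (fun m _ =>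
        contDiff_const.mul ((md_contDiff l m hf).mul (md_contDiff l _ hg)))]
    funext y
    have step : ∀ m ∈ Finset.Iic (Function.update ℓ i 0),
        (pderiv' i)^[ℓ i] (fun z => (∏ j, (((Function.update ℓ i 0) j).choose (m j) : ℝ)) *
            (md l m f z * md l (Function.update ℓ i 0 - m) g z)) y
        = ∑ jj ∈ Finset.range (ℓ i + 1),
            (∏ j, (((Function.update ℓ i 0) j).choose (m j) : ℝ)) * (((ℓ i).choose jj : ℝ) *
              ((pderiv' i)^[jj] (md l m f) y
                * (pderiv' i)^[ℓ i - jj] (md l (Function.update ℓ i 0 - m) g) y)) := by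
      intro m _
      rw [pderiv'_iterate_const_mul i (ℓ i) _
          ((md_contDiff l m hf).mul (md_contDiff l _ hg)),
        pderiv'_iterate_mul i (ℓ i) (md_contDiff l m hf) (md_contDiff l _ hg)]
      simp only [Finset.mul_sum]
    rw [Finset.sum_congr rfl step, ← Finset.sum_product']
    apply Finset.sum_nbij' (fun p : (Fin n → ℕ) × ℕ => Function.update p.1 i p.2)
      (fun m' => (Function.update m' i 0, m' i))
    · intro p hp
      simp only [Finset.mem_product, Finset.mem_Iic, Finset.mem_range] at hp
      simp only [Finset.mem_Iic]
      intro j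
      by_cases h : j = i
      · subst h; rw [Function.update_self]; exact Nat.lt_succ_iff.mp hp.2
      · rw [Function.update_of_ne h]
        have := hp.1 j
        rwa [Function.update_of_ne h] at this
    · intro m' hm'
      simp only [Finset.mem_Iic] at hm'
      simp only [Finset.mem_product, Finset.mem_Iic, Finset.mem_range]
      constructor
      · intro j
        by_cases h : j = i
        · subst h; simp
        · rw [Function.update_of_ne h, Function.update_of_ne h]
          exact hm' j
      · have := hm' i; exact Nat.lt_succ_iff.mpr this
    · intro p hp
      simp only [Finset.mem_product, Finset.mem_Iic, Finset.mem_range] at hp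
      have hp1i : p.1 i = 0 := by
        have := hp.1 i
        rwa [Function.update_self, Nat.le_zero] at this
      have h1 : Function.update (Function.update p.1 i p.2) i 0 = p.1 := by
        rw [Function.update_idem, ← hp1i, Function.update_eq_self]
      have h2 : Function.update p.1 i p.2 i = p.2 := Function.update_self _ _ _
      rw [h1, h2]
    · intro m' _
      rw [Function.update_idem, Function.update_eq_self]
    · intro p hp
      simp only [Finset.mem_product, Finset.mem_Iic, Finset.mem_range] at hp
      have hp1i : p.1 i = 0 := by
        have := hp.1 i
        rwa [Function.update_self, Nat.le_zero] at this
      have hne : ∀ j ∈ l, j ≠ i := fun j hj he => hil (he ▸ hj)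
      have e1 : md (i :: l) (Function.update p.1 i p.2) f
          = (pderiv' i)^[p.2] (md l p.1 f) := by
        rw [md_cons, Function.update_self,
          md_congr l f (fun j hj => Function.update_of_ne (hne j hj) _ _)]
      have e2 : md (i :: l) (ℓ - Function.update p.1 i p.2) g
          = (pderiv' i)^[ℓ i - p.2] (md l (Function.update ℓ i 0 - p.1) g) := by
        rw [md_cons]
        have hi : (ℓ - Function.update p.1 i p.2) i = ℓ i - p.2 := by
          simp [Pi.sub_apply]
        rw [hi, md_congr l g (ℓ₁ := ℓ - Function.update p.1 i p.2)
          (ℓ₂ := Function.update ℓ i 0 - p.1) (fun j hj => by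
            simp only [Pi.sub_apply, Function.update_of_ne (hne j hj)])]
      have c1 : ∏ j, ((ℓ j).choose (Function.update p.1 i p.2 j) : ℝ)
          = (∏ j ∈ Finset.univ.erase i, ((ℓ j).choose (p.1 j) : ℝ))
              * ((ℓ i).choose p.2 : ℝ) := by
        rw [← Finset.prod_erase_mul _ _ (Finset.mem_univ i), Function.update_self]
        congr 1
        exact Finset.prod_congr rfl fun j hj => by
          rw [Function.update_of_ne (Finset.ne_of_mem_erase hj)]
      have c2 : ∏ j, ((Function.update ℓ i 0 j).choose (p.1 j) : ℝ)
          = ∏ j ∈ Finset.univ.erase i, ((ℓ j).choose (p.1 j) : ℝ) := by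
        rw [← Finset.prod_erase_mul _ _ (Finset.mem_univ i), Function.update_self, hp1i]
        simp only [Nat.choose_self, Nat.cast_one, mul_one]
        exact Finset.prod_congr rfl fun j hj => by
          rw [Function.update_of_ne (Finset.ne_of_mem_erase hj)]
      rw [e1, e2, c1, c2]
      ring
end leibniz

section tjetlemmas
variable {n : ℕ}

lemma support_bound {s : Fin n → ℕ} (hs : ∀ i, 0 < s i) {γ : ℝ} {ℓ : Fin n → ℕ}
    (h : (∑ i, (s i * ℓ i : ℝ)) < γ) : ℓ ≤ fun _ => ⌈γ⌉₊ := by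
  intro i
  have h0 : (ℓ i : ℝ) ≤ (s i * ℓ i : ℝ) := by
    have h1 : (1:ℝ) ≤ (s i : ℝ) := by exact_mod_cast hs i
    nlinarith [(Nat.cast_nonneg (ℓ i) : (0:ℝ) ≤ (ℓ i : ℝ))]
  have h1 : (ℓ i : ℝ) ≤ ∑ j, (s j * ℓ j : ℝ) :=
    le_trans h0 (Finset.single_le_sum (f := fun j => (s j * ℓ j : ℝ))
      (fun j _ => by positivity) (Finset.mem_univ i))
  have h2 : (ℓ i : ℝ) < γ := lt_of_le_of_lt h1 h
  exact (Nat.lt_ceil.mpr h2).le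

lemma tjet_eq_sum {s : Fin n → ℕ} (hs : ∀ i, 0 < s i) (γ : ℝ) (x : Fin n → ℝ)
    (f : (Fin n → ℝ) → ℝ) :
    tjet s γ x f = fun y => ∑ ℓ ∈ Finset.Iic (fun _ : Fin n => ⌈γ⌉₊),
      (if (∑ i, (s i * ℓ i : ℝ)) < γ then mderiv ℓ f x / (∏ i, ((ℓ i).factorial : ℝ))
        else 0) * ∏ i, (y i - x i) ^ (ℓ i) := by
  funext y
  rw [tjet]
  rw [finsum_eq_sum_of_support_subset _ (s := Finset.Iic (fun _ : Fin n => ⌈γ⌉₊)) ?hsupp]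
  · apply Finset.sum_congr rfl
    intro ℓ _
    split <;> ring
  · intro ℓ hℓ
    simp only [Function.mem_support, ne_eq] at hℓ
    by_cases h : (∑ i, (s i * ℓ i : ℝ)) < γ
    · simpa [Finset.mem_Iic] using support_bound hs h
    · exact absurd (if_neg h) hℓ

lemma tjet_contDiff {s : Fin n → ℕ} (hs : ∀ i, 0 < s i) (γ : ℝ) (x : Fin n → ℝ)
    (f : (Fin n → ℝ) → ℝ) : ContDiff ℝ (⊤ : ℕ∞) (tjet s γ x f) := by
  rw [tjet_eq_sum hs]
  exact ContDiff.sum fun ℓ _ => contDiff_const.mul (mono_contDiff x ℓ)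

lemma mderiv_tjet {s : Fin n → ℕ} (hs : ∀ i, 0 < s i) (γ : ℝ) (x : Fin n → ℝ)
    (f : (Fin n → ℝ) → ℝ) (m : Fin n → ℕ) :
    mderiv m (tjet s γ x f) x
      = if (∑ i, (s i * m i : ℝ)) < γ then mderiv m f x else 0 := by
  rw [tjet_eq_sum hs, mderiv_eq_md,
    md_sum (List.finRange n) m (Finset.Iic (fun _ : Fin n => ⌈γ⌉₊))
      (fun ℓ _ => contDiff_const.mul (mono_contDiff x ℓ))]
  have hterm : ∀ ℓ ∈ Finset.Iic (fun _ : Fin n => ⌈γ⌉₊),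
      md (List.finRange n) m (fun y =>
        (if (∑ i, (s i * ℓ i : ℝ)) < γ then mderiv ℓ f x / (∏ i, ((ℓ i).factorial : ℝ))
          else 0) * ∏ i, (y i - x i) ^ (ℓ i)) x
      = if m = ℓ then
          (if (∑ i, (s i * ℓ i : ℝ)) < γ then mderiv ℓ f x / (∏ i, ((ℓ i).factorial : ℝ))
            else 0) * ∏ i, ((ℓ i).factorial : ℝ)
        else 0 := by
    intro ℓ _
    exact mderiv_mono m ℓ x _
  beta_reduce
  rw [Finset.sum_congr rfl hterm, Finset.sum_ite_eq]
  have hfact : (∏ i, ((m i).factorial : ℝ)) ≠ 0 := by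
    apply Finset.prod_ne_zero_iff.mpr
    intro i _
    exact_mod_cast (Nat.factorial_pos (m i)).ne'
  by_cases hc : (∑ i, (s i * m i : ℝ)) < γ
  · rw [if_pos hc, if_pos (by simpa [Finset.mem_Iic] using support_bound hs hc), if_pos hc]
    field_simp
  · rw [if_neg hc]
    split
    · ring
    · rfl
end tjetlemmas

/-- the Taylor jet operators form a Rota–Baxter family:
`(T_{α,x,·}f)(T_{β,x,·}g) = T_{α+β,x,·}[(T_{α,x,·}f)g + f(T_{β,x,·}g) − fg]`. -/
theorem tjet_rotaBaxter_family {d : ℕ} (s : Fin (d + 1) → ℕ) (hs : ∀ i, 0 < s i)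
    (α β : ℝ) (hα : 0 ≤ α) (hβ : 0 ≤ β) (x : Fin (d + 1) → ℝ)
    (f g : (Fin (d + 1) → ℝ) → ℝ)
    (hf : ContDiff ℝ (⊤ : ℕ∞) f) (hg : ContDiff ℝ (⊤ : ℕ∞) g) :
    ∀ y, tjet s α x f y * tjet s β x g y
      = tjet s (α + β) x
          (fun z => tjet s α x f z * g z + f z * tjet s β x g z - f z * g z) y := by
  classical
  intro y
  have hTfc : ContDiff ℝ (⊤:ℕ∞) (tjet s α x f) := tjet_contDiff hs α x f
  have hTgc : ContDiff ℝ (⊤:ℕ∞) (tjet s β x g) := tjet_contDiff hs β x g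
  have hfact : ∀ m : Fin (d+1) → ℕ, (∏ i, ((m i).factorial : ℝ)) ≠ 0 := fun m =>
    Finset.prod_ne_zero_iff.mpr fun i _ => by exact_mod_cast (Nat.factorial_pos (m i)).ne'
  -- Step A: mixed derivatives of the bracket at x
  have hH : ∀ ℓ : Fin (d+1) → ℕ,
      mderiv ℓ (fun z => tjet s α x f z * g z + f z * tjet s β x g z - f z * g z) x
      = ∑ m ∈ Finset.Iic ℓ, (∏ j, ((ℓ j).choose (m j) : ℝ)) *
          (((if (∑ i, (s i * m i : ℝ)) < α then mderiv m f x else 0) * mderiv (ℓ - m) g x)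
            + (mderiv m f x *
                (if (∑ i, (s i * (ℓ - m) i : ℝ)) < β then mderiv (ℓ - m) g x else 0))
            + (-1) * (mderiv m f x * mderiv (ℓ - m) g x)) := by
    intro ℓ
    have hsupp : ∀ j, j ∉ List.finRange (d+1) → ℓ j = 0 :=
      fun j hj => absurd (List.mem_finRange j) hj
    have hnd := List.nodup_finRange (d+1)
    have e0 : (fun z => tjet s α x f z * g z + f z * tjet s β x g z - f z * g z)
        = fun z => (tjet s α x f z * g z)
            + ((f z * tjet s β x g z) + (-1) * (f z * g z)) := by
      funext z; ring
    rw [e0, mderiv_eq_md,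
      md_add _ ℓ (hTfc.mul hg) ((hf.mul hTgc).add (contDiff_const.mul (hf.mul hg))),
      md_add _ ℓ (hf.mul hTgc) (contDiff_const.mul (hf.mul hg)),
      md_const_mul _ ℓ (-1) (hf.mul hg),
      md_leibniz _ hnd ℓ hsupp hTfc hg,
      md_leibniz _ hnd ℓ hsupp hf hTgc,
      md_leibniz _ hnd ℓ hsupp hf hg]
    beta_reduce
    simp only [← mderiv_eq_md]
    simp only [mderiv_tjet hs α x f, mderiv_tjet hs β x g]
    rw [Finset.mul_sum, ← Finset.sum_add_distrib, ← Finset.sum_add_distrib]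
    exact Finset.sum_congr rfl fun m _ => by ring
  -- Step B: RHS as a sigma-indexed sum
  have hRHS : tjet s (α+β) x
        (fun z => tjet s α x f z * g z + f z * tjet s β x g z - f z * g z) y
      = ∑ p ∈ (Finset.Iic (fun _ : Fin (d+1) => ⌈α+β⌉₊)).sigma (fun ℓ => Finset.Iic ℓ),
          (if (∑ i, (s i * p.1 i : ℝ)) < α + β then
            (∏ j, ((p.1 j).choose (p.2 j) : ℝ)) *
              (((if (∑ i, (s i * p.2 i : ℝ)) < α then mderiv p.2 f x else 0)
                  * mderiv (p.1 - p.2) g x)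
                + (mderiv p.2 f x *
                    (if (∑ i, (s i * (p.1 - p.2) i : ℝ)) < β
                      then mderiv (p.1 - p.2) g x else 0))
                + (-1) * (mderiv p.2 f x * mderiv (p.1 - p.2) g x))
              / (∏ i, ((p.1 i).factorial : ℝ)) * ∏ i, (y i - x i) ^ (p.1 i)
          else 0) := by
    rw [tjet_eq_sum hs (α+β) x _]
    beta_reduce
    have hterm : ∀ ℓ ∈ Finset.Iic (fun _ : Fin (d+1) => ⌈α+β⌉₊),
        (if (∑ i, (s i * ℓ i : ℝ)) < α + β then
            mderiv ℓ (fun z => tjet s α x f z * g z + f z * tjet s β x g z - f z * g z) x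
              / (∏ i, ((ℓ i).factorial : ℝ)) else 0)
          * ∏ i, (y i - x i) ^ (ℓ i)
        = ∑ m ∈ Finset.Iic ℓ,
          (if (∑ i, (s i * ℓ i : ℝ)) < α + β then
            (∏ j, ((ℓ j).choose (m j) : ℝ)) *
              (((if (∑ i, (s i * m i : ℝ)) < α then mderiv m f x else 0)
                  * mderiv (ℓ - m) g x)
                + (mderiv m f x *
                    (if (∑ i, (s i * (ℓ - m) i : ℝ)) < β then mderiv (ℓ - m) g x else 0))
                + (-1) * (mderiv m f x * mderiv (ℓ - m) g x))
              / (∏ i, ((ℓ i).factorial : ℝ)) * ∏ i, (y i - x i) ^ (ℓ i)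
          else 0) := by
      intro ℓ _
      split
      · rw [hH ℓ, Finset.sum_div, Finset.sum_mul]
      · simp
    rw [Finset.sum_congr rfl hterm, Finset.sum_sigma']
  -- Step C: LHS as a sum over a product of index sets
  have hsub1 : Finset.Iic (fun _ : Fin (d+1) => ⌈α⌉₊)
      ⊆ Finset.Iic (fun _ : Fin (d+1) => ⌈α+β⌉₊) :=
    Finset.Iic_subset_Iic.mpr (by intro j; exact Nat.ceil_le_ceil (by linarith))
  have hsub2 : Finset.Iic (fun _ : Fin (d+1) => ⌈β⌉₊)
      ⊆ Finset.Iic (fun _ : Fin (d+1) => ⌈α+β⌉₊) :=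
    Finset.Iic_subset_Iic.mpr (by intro j; exact Nat.ceil_le_ceil (by linarith))
  have hLHS : tjet s α x f y * tjet s β x g y
      = ∑ p ∈ (Finset.Iic fun _ : Fin (d+1) => ⌈α+β⌉₊) ×ˢ
            (Finset.Iic fun _ : Fin (d+1) => ⌈α+β⌉₊),
          ((if (∑ i, (s i * p.1 i : ℝ)) < α then
              mderiv p.1 f x / (∏ i, ((p.1 i).factorial : ℝ)) else 0)
            * ∏ i, (y i - x i) ^ (p.1 i))
          * ((if (∑ i, (s i * p.2 i : ℝ)) < β then
              mderiv p.2 g x / (∏ i, ((p.2 i).factorial : ℝ)) else 0)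
            * ∏ i, (y i - x i) ^ (p.2 i)) := by
    rw [tjet_eq_sum hs α x f, tjet_eq_sum hs β x g]
    beta_reduce
    rw [Finset.sum_subset hsub1 (fun m _ hm => by
        rw [if_neg fun hc => hm (by simpa [Finset.mem_Iic] using support_bound hs hc),
          zero_mul]),
      Finset.sum_subset hsub2 (fun m _ hm => by
        rw [if_neg fun hc => hm (by simpa [Finset.mem_Iic] using support_bound hs hc),
          zero_mul]),
      Finset.sum_mul_sum, ← Finset.sum_product']
  rw [hLHS, hRHS]
  -- Step D: restrict to the diagonal-compatible part and reindex
  rw [← Finset.sum_filter_of_ne (p := fun p : (Fin (d+1) → ℕ) × (Fin (d+1) → ℕ) =>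
      p.1 + p.2 ≤ fun _ : Fin (d+1) => ⌈α+β⌉₊) ?hvanish]
  case hvanish =>
    intro p hp hne
    by_cases h1 : (∑ i, (s i * p.1 i : ℝ)) < α
    · by_cases h2 : (∑ i, (s i * p.2 i : ℝ)) < β
      · have hc : (∑ i, (s i * (p.1 + p.2) i : ℝ)) < α + β := by
          have : ∀ i : Fin (d+1), (s i * (p.1 + p.2) i : ℝ)
              = (s i * p.1 i : ℝ) + (s i * p.2 i : ℝ) := by
            intro i; simp [Pi.add_apply]; push_cast; ring
          rw [Finset.sum_congr rfl fun i _ => this i, Finset.sum_add_distrib]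
          exact add_lt_add h1 h2
        simpa [Finset.mem_Iic] using support_bound hs hc
      · exact absurd (by rw [if_neg h2]; ring) hne
    · exact absurd (by rw [if_neg h1]; ring) hne
  apply Finset.sum_nbij'
    (i := fun p : (Fin (d+1) → ℕ) × (Fin (d+1) → ℕ) =>
      (⟨p.1 + p.2, p.1⟩ : Σ _ : Fin (d+1) → ℕ, Fin (d+1) → ℕ))
    (j := fun q : Σ _ : Fin (d+1) → ℕ, Fin (d+1) → ℕ => (q.2, q.1 - q.2))
  · intro p hp
    simp only [Finset.mem_filter, Finset.mem_product, Finset.mem_Iic] at hp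
    simp only [Finset.mem_sigma, Finset.mem_Iic]
    exact ⟨hp.2, le_self_add⟩
  · intro q hq
    simp only [Finset.mem_sigma, Finset.mem_Iic] at hq
    simp only [Finset.mem_filter, Finset.mem_product, Finset.mem_Iic]
    refine ⟨⟨le_trans hq.2 hq.1, le_trans ?_ hq.1⟩, ?_⟩
    · intro i; simp [Pi.sub_apply]
    · have : q.2 + (q.1 - q.2) = q.1 := by
        funext i
        have h2i : q.2 i ≤ q.1 i := hq.2 i
        simp only [Pi.add_apply, Pi.sub_apply]
        omega
      rw [this]; exact hq.1
  · intro p hp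
    have h1 : p.1 + p.2 - p.1 = p.2 := by
      funext i; simp only [Pi.add_apply, Pi.sub_apply]; omega
    simp [h1]
  · intro q hq
    simp only [Finset.mem_sigma, Finset.mem_Iic] at hq
    have h1 : q.2 + (q.1 - q.2) = q.1 := by
      funext i
      have h2i : q.2 i ≤ q.1 i := hq.2 i
      simp only [Pi.add_apply, Pi.sub_apply]
      omega
    obtain ⟨q1, q2⟩ := q
    simp only at h1 ⊢
    simp [h1]
  · intro p hp
    simp only [Finset.mem_filter, Finset.mem_product, Finset.mem_Iic] at hp
    have hsubpp : p.1 + p.2 - p.1 = p.2 := by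
      funext i; simp only [Pi.add_apply, Pi.sub_apply]; omega
    simp only [hsubpp]
    have hsplit : (∑ i, (s i * (p.1 + p.2) i : ℝ))
        = (∑ i, (s i * p.1 i : ℝ)) + (∑ i, (s i * p.2 i : ℝ)) := by
      rw [← Finset.sum_add_distrib]
      apply Finset.sum_congr rfl
      intro i _; simp [Pi.add_apply]; push_cast; ring
    have hmono : (∏ i, (y i - x i) ^ ((p.1 + p.2) i))
        = (∏ i, (y i - x i) ^ (p.1 i)) * ∏ i, (y i - x i) ^ (p.2 i) := by
      rw [← Finset.prod_mul_distrib]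
      apply Finset.prod_congr rfl
      intro i _; simp [Pi.add_apply, pow_add]
    by_cases h1 : (∑ i, (s i * p.1 i : ℝ)) < α
    · by_cases h2 : (∑ i, (s i * p.2 i : ℝ)) < β
      · have hγ : (∑ i, (s i * (p.1 + p.2) i : ℝ)) < α + β := by
          rw [hsplit]; exact add_lt_add h1 h2
        rw [if_pos h1, if_pos h2, if_pos hγ, if_pos h1, if_pos h2]
        have hcf : (∏ j, (((p.1 + p.2) j).choose (p.1 j) : ℝ))
            * ((∏ i, ((p.1 i).factorial : ℝ)) * (∏ i, ((p.2 i).factorial : ℝ)))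
            = ∏ i, (((p.1 + p.2) i).factorial : ℝ) := by
          rw [← Finset.prod_mul_distrib, ← Finset.prod_mul_distrib]
          apply Finset.prod_congr rfl
          intro i _
          have : ((p.1 i + p.2 i).choose (p.1 i)) * (p.1 i).factorial
              * ((p.1 i + p.2 i) - p.1 i).factorial = (p.1 i + p.2 i).factorial :=
            Nat.choose_mul_factorial_mul_factorial le_self_add
          have h2' : (p.1 i + p.2 i) - p.1 i = p.2 i := by omega
          rw [h2'] at this
          simp only [Pi.add_apply]
          push_cast [← this]
          ring
        rw [hmono, ← hcf]
        have hCne : (∏ j, (((p.1 + p.2) j).choose (p.1 j) : ℝ)) ≠ 0 := by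
          apply Finset.prod_ne_zero_iff.mpr
          intro i _
          have : 0 < ((p.1 + p.2) i).choose (p.1 i) :=
            Nat.choose_pos (by simp [Pi.add_apply])
          exact_mod_cast this.ne'
        rw [mul_div_mul_left _ _ hCne]
        field_simp
        ring
      · rw [if_neg h2, if_pos h1]
        split
        · ring
        · ring
    · by_cases h2 : (∑ i, (s i * p.2 i : ℝ)) < β
      · rw [if_neg h1, if_pos h2]
        split
        · ring
        · ring
      · have hγ : ¬ (∑ i, (s i * (p.1 + p.2) i : ℝ)) < α + β := by
          rw [hsplit]
          push_neg at h1 h2 ⊢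
          linarith
        rw [if_neg h1, if_neg hγ]
        ring
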